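/- Let r = r₁&r₂ be a SOIRE over a finite alphabet Σ (so in particular α(r₁) ∩ α(r₂) = ∅) and let s be any string over Σ. Then r₁&r₂ matches filter(s, α(r₁&r₂)) if and only if r₁ matches filter(s, α(r₁)) and r₂ matches filter(s, α(r₂)). -/

import Mathlib

/-- Regular expressions with interleaving, RE(&). -/
inductive RE (α : Type) : Type where
  | sym : α → RE α
  | opt : RE α → RE α
  | star : RE α → RE α
  | plus : RE α → RE α
  | cat : RE α → RE α → RE α
  | inter : RE α → RE α → RE α
  | alt : RE α → RE α → RE α

/-- `Shuffle s₁ s₂ s` : `s` is a shuffle (interleaving) of `s₁` and `s₂`. -/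
inductive Shuffle {α : Type} : List α → List α → List α → Prop where
  | nil : Shuffle [] [] []
  | left {a : α} {s₁ s₂ s : List α} : Shuffle s₁ s₂ s → Shuffle (a :: s₁) s₂ (a :: s)
  | right {a : α} {s₁ s₂ s : List α} : Shuffle s₁ s₂ s → Shuffle s₁ (a :: s₂) (a :: s)

/-- The matching relation `r ⊨ s`. -/
inductive Matches {α : Type} : RE α → List α → Prop where
  | sym (a : α) : Matches (RE.sym a) [a]
  | optEps (r : RE α) : Matches (RE.opt r) []
  | opt {r : RE α} {s : List α} : Matches r s → Matches (RE.opt r) s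
  | starEps (r : RE α) : Matches (RE.star r) []
  | starStep {r : RE α} {s₁ s₂ : List α} : s₂ ≠ [] → Matches (RE.star r) s₁ →
      Matches r s₂ → Matches (RE.star r) (s₁ ++ s₂)
  | plus {r : RE α} {s₁ s₂ : List α} : Matches (RE.star r) s₁ → Matches r s₂ →
      Matches (RE.plus r) (s₁ ++ s₂)
  | cat {r₁ r₂ : RE α} {s₁ s₂ : List α} : Matches r₁ s₁ → Matches r₂ s₂ →
      Matches (RE.cat r₁ r₂) (s₁ ++ s₂)
  | inter {r₁ r₂ : RE α} {s₁ s₂ s : List α} : Shuffle s₁ s₂ s → Matches r₁ s₁ →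
      Matches r₂ s₂ → Matches (RE.inter r₁ r₂) s
  | altLeft {r₁ r₂ : RE α} {s : List α} : Matches r₁ s → Matches (RE.alt r₁ r₂) s
  | altRight {r₁ r₂ : RE α} {s : List α} : Matches r₂ s → Matches (RE.alt r₁ r₂) s

/-- The list of symbol occurrences of a RE(&). -/
def RE.symList {α : Type} : RE α → List α
  | .sym a => [a]
  | .opt r => r.symList
  | .star r => r.symList
  | .plus r => r.symList
  | .cat r₁ r₂ => r₁.symList ++ r₂.symList
  | .inter r₁ r₂ => r₁.symList ++ r₂.symList
  | .alt r₁ r₂ => r₁.symList ++ r₂.symList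

/-- A SOIRE is a RE(&) in which every symbol occurs at most once. -/
def SOIRE {α : Type} (r : RE α) : Prop := r.symList.Nodup

/-- `α(r)` : the set of symbols occurring in `r`. -/
def RE.alpha {α : Type} [DecidableEq α] : RE α → Finset α
  | .sym a => {a}
  | .opt r => r.alpha
  | .star r => r.alpha
  | .plus r => r.alpha
  | .cat r₁ r₂ => r₁.alpha ∪ r₂.alpha
  | .inter r₁ r₂ => r₁.alpha ∪ r₂.alpha
  | .alt r₁ r₂ => r₁.alpha ∪ r₂.alpha

/-- `filter(s, V)` : the subsequence of `s` of entries lying in `V`. -/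
def filt {α : Type} [DecidableEq α] (s : List α) (V : Finset α) : List α :=
  s.filter (fun a => decide (a ∈ V))

lemma shuffle_mem {α : Type} {s₁ s₂ s : List α} (h : Shuffle s₁ s₂ s) :
    ∀ a, a ∈ s ↔ a ∈ s₁ ∨ a ∈ s₂ := by
  induction h with
  | nil => simp
  | left _ ih => intro a; simp [ih, or_assoc]
  | right _ ih => intro a; simp [ih]; tauto

lemma alpha_eq {α : Type} [DecidableEq α] (r : RE α) :
    r.alpha = r.symList.toFinset := by
  induction r <;> simp [RE.alpha, RE.symList, *]

lemma matches_mem {α : Type} [DecidableEq α] {r : RE α} {s : List α}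
    (h : Matches r s) : ∀ a ∈ s, a ∈ r.alpha := by
  induction h with
  | sym a => simp [RE.alpha]
  | optEps => simp
  | opt _ ih => exact ih
  | starEps => simp
  | starStep _ _ _ ih1 ih2 =>
    intro a ha
    rcases List.mem_append.1 ha with h | h
    exacts [ih1 a h, ih2 a h]
  | plus _ _ ih1 ih2 =>
    intro a ha
    rcases List.mem_append.1 ha with h | h
    exacts [ih1 a h, ih2 a h]
  | cat _ _ ih1 ih2 =>
    intro a ha
    rcases List.mem_append.1 ha with h | h
    · exact Finset.mem_union_left _ (ih1 a h)
    · exact Finset.mem_union_right _ (ih2 a h)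
  | inter hsh _ _ ih1 ih2 =>
    intro a ha
    rcases (shuffle_mem hsh a).1 ha with h | h
    · exact Finset.mem_union_left _ (ih1 a h)
    · exact Finset.mem_union_right _ (ih2 a h)
  | altLeft _ ih => intro a ha; exact Finset.mem_union_left _ (ih a ha)
  | altRight _ ih => intro a ha; exact Finset.mem_union_right _ (ih a ha)

lemma shuffle_filter_left {α : Type} {s₁ s₂ s : List α} (p : α → Bool)
    (h : Shuffle s₁ s₂ s) (h1 : ∀ a ∈ s₁, p a = true) (h2 : ∀ a ∈ s₂, p a = false) :
    s.filter p = s₁ := by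
  induction h with
  | nil => simp
  | @left a s₁ s₂ s _ ih =>
    have := h1 a (by simp)
    simp [List.filter_cons, this, ih (fun b hb => h1 b (by simp [hb])) h2]
  | @right a s₁ s₂ s _ ih =>
    have := h2 a (by simp)
    simp [List.filter_cons, this, ih h1 (fun b hb => h2 b (by simp [hb]))]

lemma shuffle_symm {α : Type} {s₁ s₂ s : List α} (h : Shuffle s₁ s₂ s) :
    Shuffle s₂ s₁ s := by
  induction h with
  | nil => exact Shuffle.nil
  | left _ ih => exact Shuffle.right ih
  | right _ ih => exact Shuffle.left ih

lemma shuffle_of_filters {α : Type} [DecidableEq α] (s : List α) (V₁ V₂ : Finset α)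
    (hd : ∀ a, a ∈ V₁ → a ∉ V₂) :
    Shuffle (filt s V₁) (filt s V₂) (filt s (V₁ ∪ V₂)) := by
  induction s with
  | nil => exact Shuffle.nil
  | cons a t ih =>
    by_cases h1 : a ∈ V₁
    · have h2 : a ∉ V₂ := hd a h1
      simpa [filt, List.filter_cons, h1, h2] using Shuffle.left ih
    · by_cases h2 : a ∈ V₂
      · simpa [filt, List.filter_cons, h1, h2] using Shuffle.right ih
      · simpa [filt, List.filter_cons, h1, h2] using ih

/-- for a SOIRE `r₁&r₂`, `r₁&r₂ ⊨ filter(s, α(r₁&r₂))` iff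
`r₁ ⊨ filter(s, α(r₁))` and `r₂ ⊨ filter(s, α(r₂))`. -/
theorem soire_inter_filter_match {α : Type} [DecidableEq α] (r₁ r₂ : RE α)
    (hr : SOIRE (RE.inter r₁ r₂)) (s : List α) :
    Matches (RE.inter r₁ r₂) (filt s (RE.inter r₁ r₂).alpha) ↔
      Matches r₁ (filt s r₁.alpha) ∧ Matches r₂ (filt s r₂.alpha) := by
  have hd : ∀ a, a ∈ r₁.alpha → a ∉ r₂.alpha := by
    have := (List.nodup_append.1 hr).2.2
    intro a h1 h2
    rw [alpha_eq, List.mem_toFinset] at h1 h2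
    exact this a h1 a h2 rfl
  constructor
  · intro h
    obtain ⟨s₁, s₂, hsh, hm1, hm2⟩ : ∃ s₁ s₂, Shuffle s₁ s₂ (filt s (RE.inter r₁ r₂).alpha) ∧
        Matches r₁ s₁ ∧ Matches r₂ s₂ := by
      cases h with
      | inter hsh hm1 hm2 => exact ⟨_, _, hsh, hm1, hm2⟩
    have e1 : (filt s (RE.inter r₁ r₂).alpha).filter (fun a => decide (a ∈ r₁.alpha)) = s₁ :=
      shuffle_filter_left _ hsh
        (fun a ha => by simpa using matches_mem hm1 a ha)
        (fun a ha => by simpa using fun h => hd a h (matches_mem hm2 a ha))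
    have e2 : (filt s (RE.inter r₁ r₂).alpha).filter (fun a => decide (a ∈ r₂.alpha)) = s₂ := by
      exact shuffle_filter_left _ (shuffle_symm hsh)
        (fun a ha => by simpa using matches_mem hm2 a ha)
        (fun a ha => by simpa using fun h => hd a (matches_mem hm1 a ha) h)
    have key : ∀ V : Finset α, (filt s (RE.inter r₁ r₂).alpha).filter
        (fun a => decide (a ∈ V)) = filt s ((RE.inter r₁ r₂).alpha ∩ V) := by
      intro V
      simp only [filt, List.filter_filter, Finset.mem_inter]
      congr 1
      funext a
      rw [Bool.and_comm]
      simp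
    rw [key] at e1 e2
    have i1 : (RE.inter r₁ r₂).alpha ∩ r₁.alpha = r₁.alpha := by
      simp [RE.alpha, Finset.union_inter_cancel_left]
    have i2 : (RE.inter r₁ r₂).alpha ∩ r₂.alpha = r₂.alpha := by
      simp [RE.alpha, Finset.union_inter_cancel_right]
    rw [i1] at e1; rw [i2] at e2
    exact ⟨e1 ▸ hm1, e2 ▸ hm2⟩
  · rintro ⟨h1, h2⟩
    exact Matches.inter (shuffle_of_filters s _ _ hd) h1 h2
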